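/- Let p > 0 and suppose there exist constants k, K > 0 and exponents q ≥ r ≥ 0 such that k|y|^r ≤ |s(y)| ≤ K|y|^q for all |y| ≥ 1, and suppose r ≤ p ≤ q. If ∫_ℝ |y|^p ν(dy) < ∞ and ∫_1^∞ y^{p-r-1} |c_Y(y) - c_Y(-y)| dy < ∞, then ∫_0^∞ z^{p-1}(ν₊(z)+ν₋(z)) dz < ∞; and if ∫_0^∞ z^{p-1}(ν₊(z)+ν₋(z)) dz < ∞, then ∫_ℝ |y|^p ν(dy) < ∞ and ∫_1^∞ y^{p-q-1} |c_Y(y) - c_Y(-y)| dy < ∞. In particular, when r = q these conditions are equivalent. -/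

import Mathlib

open MeasureTheory Set Filter
open scoped ENNReal NNReal Classical

/-- The function `c_Y` of the paper: `c_Y y = ∫_{[0,∞)} min(s(y),s(w)) ν(dw)` for `y ≥ 0`,
`c_Y y = ∫_{(-∞,0)} min(|s(y)|,|s(w)|) ν(dw)` for `y < 0`. -/
noncomputable def cY (s : ℝ → ℝ) (ν : Measure ℝ) (y : ℝ) : ℝ :=
  if 0 ≤ y then ∫ w in Ici (0 : ℝ), min (s y) (s w) ∂ν
  else ∫ w in Iio (0 : ℝ), min |s y| |s w| ∂ν

/-- The slope `(c_Y(z) - c_Y(-y))/(s(z) - s(-y))` in the definition of `ζ₊, ρ₊`. -/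
noncomputable def slopeYPlus (s : ℝ → ℝ) (ν : Measure ℝ) (z y : ℝ) : ℝ :=
  (cY s ν z - cY s ν (-y)) / (s z - s (-y))

/-- The slope `(c_Y(y) - c_Y(-z))/(s(y) - s(-z))` in the definition of `ζ₋, ρ₋`. -/
noncomputable def slopeYMinus (s : ℝ → ℝ) (ν : Measure ℝ) (z y : ℝ) : ℝ :=
  (cY s ν y - cY s ν (-z)) / (s y - s (-z))

/-- The set of `y > 0` attaining the infimum in the definition of `ρ₊(z)`. -/
def argYPlus (s : ℝ → ℝ) (ν : Measure ℝ) (z : ℝ) : Set ℝ :=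
  {y | 0 < y ∧ ∀ x, 0 < x → slopeYPlus s ν z y ≤ slopeYPlus s ν z x}

/-- The set of `y > 0` attaining the supremum in the definition of `ρ₋(z)`. -/
def argYMinus (s : ℝ → ℝ) (ν : Measure ℝ) (z : ℝ) : Set ℝ :=
  {y | 0 < y ∧ ∀ x, 0 < x → slopeYMinus s ν z x ≤ slopeYMinus s ν z y}

/-- `ζ₊(z) = -inf_{y>0} (c_Y(z)-c_Y(-y))/(s(z)-s(-y))` if attained, `0` otherwise. -/
noncomputable def zetaPlus (s : ℝ → ℝ) (ν : Measure ℝ) (z : ℝ) : ℝ :=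
  if (argYPlus s ν z).Nonempty then -sInf (slopeYPlus s ν z '' Ioi 0) else 0

/-- `ζ₋(z) = sup_{y>0} (c_Y(y)-c_Y(-z))/(s(y)-s(-z))` if attained, `0` otherwise. -/
noncomputable def zetaMinus (s : ℝ → ℝ) (ν : Measure ℝ) (z : ℝ) : ℝ :=
  if (argYMinus s ν z).Nonempty then sSup (slopeYMinus s ν z '' Ioi 0) else 0

/-- `ν₊(z) = ζ₊(z) + ν([z,∞))`, the tail distribution function of the supremum of the
stopped process for the optimal embedding. -/
noncomputable def nuPlus (s : ℝ → ℝ) (ν : Measure ℝ) (z : ℝ) : ℝ :=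
  zetaPlus s ν z + (ν (Ici z)).toReal

/-- `ν₋(z) = ν((-∞,-z]) + ζ₋(z)`, the tail distribution function of minus the infimum of
the stopped process for the optimal embedding. -/
noncomputable def nuMinus (s : ℝ → ℝ) (ν : Measure ℝ) (z : ℝ) : ℝ :=
  (ν (Iic (-z))).toReal + zetaMinus s ν z

section Helpers

variable {s : ℝ → ℝ} {ν : Measure ℝ}

lemma integrableOn_min_Ici (hs : Continuous s) (hmono : StrictMono s) (hs0 : s 0 = 0)
    [IsFiniteMeasure ν] {y : ℝ} (hy : 0 ≤ y) :
    IntegrableOn (fun w => min (s y) (s w)) (Ici 0) ν := by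
  apply Integrable.mono' (integrable_const (s y))
    ((continuous_const.min hs).aestronglyMeasurable)
  filter_upwards [ae_restrict_mem measurableSet_Ici] with w hw
  have h0 : 0 ≤ s w := hs0 ▸ hmono.monotone hw
  have h0y : 0 ≤ s y := hs0 ▸ hmono.monotone hy
  rw [Real.norm_eq_abs, abs_of_nonneg (le_min h0y h0)]
  exact min_le_left _ _

lemma integrableOn_min_Iio (hs : Continuous s) [IsFiniteMeasure ν] (y : ℝ) :
    IntegrableOn (fun w => min |s y| |s w|) (Iio 0) ν := by
  apply Integrable.mono' (integrable_const |s y|)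
    ((continuous_const.min hs.abs).aestronglyMeasurable)
  filter_upwards with w
  rw [Real.norm_eq_abs, abs_of_nonneg (le_min (abs_nonneg _) (abs_nonneg _))]
  exact min_le_left _ _

lemma cY_nonneg (hmono : StrictMono s) (hs0 : s 0 = 0) (y : ℝ) : 0 ≤ cY s ν y := by
  rw [cY]
  split_ifs with h
  · exact setIntegral_nonneg measurableSet_Ici fun w hw =>
      le_min (hs0 ▸ hmono.monotone h) (hs0 ▸ hmono.monotone hw)
  · exact setIntegral_nonneg measurableSet_Iio fun w _ =>
      le_min (abs_nonneg _) (abs_nonneg _)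

lemma cY_le_pos (hs : Continuous s) (hmono : StrictMono s) (hs0 : s 0 = 0)
    [IsProbabilityMeasure ν] {y : ℝ} (hy : 0 ≤ y) : cY s ν y ≤ s y := by
  have h0y : 0 ≤ s y := hs0 ▸ hmono.monotone hy
  rw [cY, if_pos hy]
  calc ∫ w in Ici (0:ℝ), min (s y) (s w) ∂ν ≤ ∫ _ in Ici (0:ℝ), s y ∂ν := by
        apply setIntegral_mono_on (integrableOn_min_Ici hs hmono hs0 hy)
          (integrableOn_const (measure_ne_top _ _)) measurableSet_Ici
        exact fun w _ => min_le_left _ _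
    _ = (ν (Ici (0:ℝ))).toReal * s y := by rw [setIntegral_const, smul_eq_mul]; rfl
    _ ≤ 1 * s y := by
        apply mul_le_mul_of_nonneg_right _ h0y
        exact ENNReal.toReal_le_of_le_ofReal one_pos.le (by simpa using prob_le_one)
    _ = s y := one_mul _

lemma cY_le_neg (hs : Continuous s) [IsProbabilityMeasure ν] {y : ℝ} (hy : y < 0) :
    cY s ν y ≤ |s y| := by
  rw [cY, if_neg (not_le.2 hy)]
  calc ∫ w in Iio (0:ℝ), min |s y| |s w| ∂ν ≤ ∫ _ in Iio (0:ℝ), |s y| ∂ν := by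
        apply setIntegral_mono_on (integrableOn_min_Iio hs y)
          (integrableOn_const (measure_ne_top _ _)) measurableSet_Iio
        exact fun w _ => min_le_left _ _
    _ = (ν (Iio (0:ℝ))).toReal * |s y| := by rw [setIntegral_const, smul_eq_mul]; rfl
    _ ≤ 1 * |s y| := by
        apply mul_le_mul_of_nonneg_right _ (abs_nonneg _)
        exact ENNReal.toReal_le_of_le_ofReal one_pos.le (by simpa using prob_le_one)
    _ = |s y| := one_mul _

lemma cY_incr_pos (hs : Continuous s) (hmono : StrictMono s) (hs0 : s 0 = 0)
    [IsProbabilityMeasure ν] {z y : ℝ} (hz : 0 ≤ z) (hzy : z ≤ y) :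
    0 ≤ cY s ν y - cY s ν z ∧
      cY s ν y - cY s ν z ≤ (s y - s z) * (ν (Ioi z)).toReal := by
  have hy : 0 ≤ y := hz.trans hzy
  rw [cY, if_pos hy, cY, if_pos hz, ← integral_sub (integrableOn_min_Ici hs hmono hs0 hy)
    (integrableOn_min_Ici hs hmono hs0 hz)]
  constructor
  · apply setIntegral_nonneg measurableSet_Ici
    intro w _
    simp only [sub_nonneg]
    exact min_le_min (hmono.monotone hzy) le_rfl
  · calc ∫ w in Ici (0:ℝ), (min (s y) (s w) - min (s z) (s w)) ∂ν
        ≤ ∫ w in Ici (0:ℝ), (Ioi z).indicator (fun _ => s y - s z) w ∂ν := by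
          apply setIntegral_mono_on
            ((integrableOn_min_Ici hs hmono hs0 hy).sub (integrableOn_min_Ici hs hmono hs0 hz))
            ((integrable_const _).indicator measurableSet_Ioi) measurableSet_Ici
          intro w _
          by_cases hw : w ∈ Ioi z
          · simp only [Pi.sub_apply]
            rw [indicator_of_mem hw]
            rw [mem_Ioi] at hw
            have h1 : min (s z) (s w) = s z := min_eq_left (hmono.monotone hw.le)
            have h2 : min (s y) (s w) ≤ s y := min_le_left _ _
            linarith
          · simp only [Pi.sub_apply]
            rw [indicator_of_notMem hw]
            rw [mem_Ioi, not_lt] at hw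
            have h1 : min (s z) (s w) = s w := min_eq_right (hmono.monotone hw)
            have h2 : min (s y) (s w) = s w := min_eq_right (hmono.monotone (hw.trans hzy))
            simp [h1, h2]
    _ = (ν (Ioi z ∩ Ici 0)).toReal * (s y - s z) := by
          rw [integral_indicator measurableSet_Ioi]
          rw [Measure.restrict_restrict measurableSet_Ioi, setIntegral_const, smul_eq_mul]; rfl
    _ ≤ (ν (Ioi z)).toReal * (s y - s z) := by
          apply mul_le_mul_of_nonneg_right _ (sub_nonneg.2 (hmono.monotone hzy))
          exact ENNReal.toReal_mono (measure_ne_top _ _) (measure_mono inter_subset_left)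
    _ = (s y - s z) * (ν (Ioi z)).toReal := mul_comm _ _

lemma cY_incr_neg (hs : Continuous s) (hmono : StrictMono s) (hs0 : s 0 = 0)
    [IsProbabilityMeasure ν] {z y : ℝ} (hz : 0 < z) (hzy : z ≤ y) :
    0 ≤ cY s ν (-y) - cY s ν (-z) ∧
      cY s ν (-y) - cY s ν (-z) ≤ (s (-z) - s (-y)) * (ν (Iio (-z))).toReal := by
  have hy : 0 < y := hz.trans_le hzy
  have hsy : s (-y) < 0 := hs0 ▸ hmono (neg_lt_zero.2 hy)
  have hsz : s (-z) < 0 := hs0 ▸ hmono (neg_lt_zero.2 hz)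
  have hmm : s (-y) ≤ s (-z) := hmono.monotone (by linarith)
  have habsy : |s (-y)| = -s (-y) := abs_of_neg hsy
  have habsz : |s (-z)| = -s (-z) := abs_of_neg hsz
  rw [cY, if_neg (not_le.2 (neg_lt_zero.2 hy)), cY, if_neg (not_le.2 (neg_lt_zero.2 hz)),
    ← integral_sub (integrableOn_min_Iio hs (-y)) (integrableOn_min_Iio hs (-z))]
  have habs_le : |s (-z)| ≤ |s (-y)| := by rw [habsy, habsz]; linarith
  constructor
  · apply setIntegral_nonneg measurableSet_Iio
    intro w _
    simp only [sub_nonneg]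
    exact min_le_min habs_le le_rfl
  · calc ∫ w in Iio (0:ℝ), (min |s (-y)| |s w| - min |s (-z)| |s w|) ∂ν
        ≤ ∫ w in Iio (0:ℝ), (Iio (-z)).indicator (fun _ => s (-z) - s (-y)) w ∂ν := by
          apply setIntegral_mono_on
            ((integrableOn_min_Iio hs (-y)).sub (integrableOn_min_Iio hs (-z)))
            ((integrable_const _).indicator measurableSet_Iio) measurableSet_Iio
          intro w hw
          have hsw : s w < 0 := hs0 ▸ hmono hw
          have habsw : |s w| = -s w := abs_of_neg hsw
          by_cases hwz : w ∈ Iio (-z)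
          · simp only [Pi.sub_apply]
            rw [indicator_of_mem hwz]
            rw [mem_Iio] at hwz
            have h1 : |s (-z)| ≤ |s w| := by
              rw [habsw, habsz]
              have := hmono.monotone hwz.le
              linarith
            have h2 : min |s (-z)| |s w| = |s (-z)| := min_eq_left h1
            have h3 : min |s (-y)| |s w| ≤ |s (-y)| := min_le_left _ _
            rw [h2, habsy, habsz] at *
            linarith
          · simp only [Pi.sub_apply]
            rw [indicator_of_notMem hwz]
            rw [mem_Iio, not_lt] at hwz
            have h1 : |s w| ≤ |s (-z)| := by
              rw [habsw, habsz]
              have := hmono.monotone hwz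
              linarith
            have h2 : min |s (-z)| |s w| = |s w| := min_eq_right h1
            have h3 : min |s (-y)| |s w| = |s w| := min_eq_right (h1.trans habs_le)
            simp [h2, h3]
    _ = (ν (Iio (-z) ∩ Iio 0)).toReal * (s (-z) - s (-y)) := by
          rw [integral_indicator measurableSet_Iio]
          rw [Measure.restrict_restrict measurableSet_Iio, setIntegral_const, smul_eq_mul]; rfl
    _ ≤ (ν (Iio (-z))).toReal * (s (-z) - s (-y)) := by
          apply mul_le_mul_of_nonneg_right _ (by linarith)
          exact ENNReal.toReal_mono (measure_ne_top _ _) (measure_mono inter_subset_left)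
    _ = (s (-z) - s (-y)) * (ν (Iio (-z))).toReal := mul_comm _ _

end Helpers

section Helpers2

variable {s : ℝ → ℝ} {ν : Measure ℝ}

lemma toReal_prob_le_one [IsProbabilityMeasure ν] (A : Set ℝ) : (ν A).toReal ≤ 1 := by
  have h : ν A ≤ 1 := prob_le_one
  calc (ν A).toReal ≤ (1 : ℝ≥0∞).toReal := ENNReal.toReal_mono ENNReal.one_ne_top h
    _ = 1 := ENNReal.toReal_one

lemma cY_lip_pos (hs : Continuous s) (hmono : StrictMono s) (hs0 : s 0 = 0)
    [IsProbabilityMeasure ν] {y y' : ℝ} (hy : 0 ≤ y) (hy' : 0 ≤ y') :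
    |cY s ν y - cY s ν y'| ≤ |s y - s y'| := by
  have key : ∀ a b : ℝ, 0 ≤ a → a ≤ b → |cY s ν b - cY s ν a| ≤ |s b - s a| := by
    intro a b ha hab
    obtain ⟨h1, h2⟩ := cY_incr_pos (ν := ν) hs hmono hs0 ha hab
    rw [abs_of_nonneg h1, abs_of_nonneg (sub_nonneg.2 (hmono.monotone hab))]
    calc cY s ν b - cY s ν a ≤ (s b - s a) * (ν (Ioi a)).toReal := h2
      _ ≤ (s b - s a) * 1 := by
          exact mul_le_mul_of_nonneg_left (toReal_prob_le_one (ν := ν) _) (sub_nonneg.2 (hmono.monotone hab))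
      _ = s b - s a := mul_one _
  rcases le_total y' y with h | h
  · exact key y' y hy' h
  · rw [abs_sub_comm, abs_sub_comm (s y)]
    exact key y y' hy h

lemma cY_lip_neg (hs : Continuous s) (hmono : StrictMono s) (hs0 : s 0 = 0)
    [IsProbabilityMeasure ν] {y y' : ℝ} (hy : 0 < y) (hy' : 0 < y') :
    |cY s ν (-y) - cY s ν (-y')| ≤ |s (-y) - s (-y')| := by
  have key : ∀ a b : ℝ, 0 < a → a ≤ b → |cY s ν (-b) - cY s ν (-a)| ≤ |s (-b) - s (-a)| := by
    intro a b ha hab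
    obtain ⟨h1, h2⟩ := cY_incr_neg (ν := ν) hs hmono hs0 ha hab
    have hsab : s (-b) ≤ s (-a) := hmono.monotone (by linarith)
    rw [abs_of_nonneg h1, abs_sub_comm, abs_of_nonneg (sub_nonneg.2 hsab)]
    calc cY s ν (-b) - cY s ν (-a) ≤ (s (-a) - s (-b)) * (ν (Iio (-a))).toReal := h2
      _ ≤ (s (-a) - s (-b)) * 1 := by
          exact mul_le_mul_of_nonneg_left (toReal_prob_le_one (ν := ν) _) (by linarith)
      _ = s (-a) - s (-b) := mul_one _
  rcases le_total y' y with h | h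
  · exact key y' y hy' h
  · rw [abs_sub_comm, abs_sub_comm (s (-y))]
    exact key y y' hy h

lemma cY_contOn_pos (hs : Continuous s) (hmono : StrictMono s) (hs0 : s 0 = 0)
    [IsProbabilityMeasure ν] : ContinuousOn (cY s ν) (Ici 0) := by
  intro y hy
  rw [Metric.continuousWithinAt_iff]
  intro ε hε
  obtain ⟨δ, hδ, hδ'⟩ := Metric.continuous_iff.1 hs y ε hε
  refine ⟨δ, hδ, fun {x} hx hxd => ?_⟩
  calc dist (cY s ν x) (cY s ν y) ≤ |s x - s y| := by
        rw [Real.dist_eq]; exact cY_lip_pos hs hmono hs0 hx hy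
    _ < ε := by rw [← Real.dist_eq]; exact hδ' x hxd

lemma cY_contOn_neg (hs : Continuous s) (hmono : StrictMono s) (hs0 : s 0 = 0)
    [IsProbabilityMeasure ν] : ContinuousOn (fun y => cY s ν (-y)) (Ioi 0) := by
  intro y hy
  rw [Metric.continuousWithinAt_iff]
  intro ε hε
  obtain ⟨δ, hδ, hδ'⟩ := Metric.continuous_iff.1 (hs.comp continuous_neg) y ε hε
  refine ⟨δ, hδ, fun {x} hx hxd => ?_⟩
  calc dist (cY s ν (-x)) (cY s ν (-y)) ≤ |s (-x) - s (-y)| := by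
        rw [Real.dist_eq]; exact cY_lip_neg hs hmono hs0 hx hy
    _ < ε := by rw [← Real.dist_eq]; exact hδ' x hxd

end Helpers2

section Zeta

variable {s : ℝ → ℝ} {ν : Measure ℝ}

lemma slopeYPlus_def (s : ℝ → ℝ) (ν : Measure ℝ) (z y : ℝ) :
    slopeYPlus s ν z y = (cY s ν z - cY s ν (-y)) / (s z - s (-y)) := rfl

lemma slopeYMinus_def (s : ℝ → ℝ) (ν : Measure ℝ) (z y : ℝ) :
    slopeYMinus s ν z y = (cY s ν y - cY s ν (-z)) / (s y - s (-z)) := rfl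

lemma s_pos' (hmono : StrictMono s) (hs0 : s 0 = 0) {z : ℝ} (hz : 0 < z) : 0 < s z :=
  hs0 ▸ hmono hz

lemma s_neg' (hmono : StrictMono s) (hs0 : s 0 = 0) {z : ℝ} (hz : 0 < z) : s (-z) < 0 :=
  hs0 ▸ hmono (neg_lt_zero.2 hz)

lemma denom_pos (hmono : StrictMono s) (hs0 : s 0 = 0) {z y : ℝ} (hz : 0 < z) (hy : 0 < y) :
    0 < s z - s (-y) := by
  have h1 := s_pos' hmono hs0 hz
  have h2 := s_neg' hmono hs0 hy
  linarith

lemma zetaPlus_eq {z y₀ : ℝ} (h : y₀ ∈ argYPlus s ν z) :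
    zetaPlus s ν z = -slopeYPlus s ν z y₀ := by
  rw [zetaPlus, if_pos ⟨y₀, h⟩, neg_inj]
  apply le_antisymm
  · exact csInf_le ⟨slopeYPlus s ν z y₀, by rintro a ⟨x, hx, rfl⟩; exact h.2 x hx⟩
      ⟨y₀, h.1, rfl⟩
  · exact le_csInf ⟨_, ⟨y₀, h.1, rfl⟩⟩ (by rintro a ⟨x, hx, rfl⟩; exact h.2 x hx)

lemma zetaMinus_eq {z y₀ : ℝ} (h : y₀ ∈ argYMinus s ν z) :
    zetaMinus s ν z = slopeYMinus s ν z y₀ := by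
  rw [zetaMinus, if_pos ⟨y₀, h⟩]
  apply le_antisymm
  · exact csSup_le ⟨_, ⟨y₀, h.1, rfl⟩⟩ (by rintro a ⟨x, hx, rfl⟩; exact h.2 x hx)
  · exact le_csSup ⟨slopeYMinus s ν z y₀, by rintro a ⟨x, hx, rfl⟩; exact h.2 x hx⟩
      ⟨y₀, h.1, rfl⟩

lemma slopeYMinus_le_zetaMinus {z y : ℝ} (hy : 0 < y) (h : (argYMinus s ν z).Nonempty) :
    slopeYMinus s ν z y ≤ zetaMinus s ν z := by
  obtain ⟨y₀, hy₀⟩ := h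
  rw [zetaMinus_eq hy₀]
  exact hy₀.2 y hy

lemma neg_zetaPlus_le_slopeYPlus {z y : ℝ} (hy : 0 < y) (h : (argYPlus s ν z).Nonempty) :
    -zetaPlus s ν z ≤ slopeYPlus s ν z y := by
  obtain ⟨y₀, hy₀⟩ := h
  rw [zetaPlus_eq hy₀, neg_neg]
  exact hy₀.2 y hy

lemma zetaPlus_nonneg (hs : Continuous s) (hmono : StrictMono s) (hs0 : s 0 = 0)
    [IsProbabilityMeasure ν] {z : ℝ} (hz : 0 < z) : 0 ≤ zetaPlus s ν z := by
  by_cases h : (argYPlus s ν z).Nonempty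
  · obtain ⟨y₀, hy₀⟩ := h
    rw [zetaPlus_eq hy₀, neg_nonneg]
    by_contra hpos
    push_neg at hpos
    rw [slopeYPlus_def] at hpos
    have hy₀pos : 0 < y₀ := hy₀.1
    have hD₀ : 0 < s z - s (-y₀) := denom_pos hmono hs0 hz hy₀pos
    have hN₀ : 0 < cY s ν z - cY s ν (-y₀) := by
      rcases div_pos_iff.1 hpos with ⟨hN, _⟩ | ⟨_, hD'⟩
      · exact hN
      · linarith
    have hD₁ : s z - s (-y₀) < s z - s (-(y₀ + 1)) := by
      have : s (-(y₀ + 1)) < s (-y₀) := hmono (by linarith)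
      linarith
    have hN₁ : cY s ν z - cY s ν (-(y₀ + 1)) ≤ cY s ν z - cY s ν (-y₀) := by
      have := (cY_incr_neg (ν := ν) hs hmono hs0 hy₀pos (le_of_lt (lt_add_one y₀))).1
      linarith
    have hle := hy₀.2 (y₀ + 1) (by linarith)
    rw [slopeYPlus_def, slopeYPlus_def] at hle
    rw [div_le_div_iff₀ hD₀ (by linarith)] at hle
    nlinarith
  · rw [zetaPlus, if_neg h]

lemma zetaMinus_nonneg (hs : Continuous s) (hmono : StrictMono s) (hs0 : s 0 = 0)
    [IsProbabilityMeasure ν] {z : ℝ} (hz : 0 < z) : 0 ≤ zetaMinus s ν z := by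
  by_cases h : (argYMinus s ν z).Nonempty
  · obtain ⟨y₀, hy₀⟩ := h
    rw [zetaMinus_eq hy₀]
    by_contra hneg
    push_neg at hneg
    rw [slopeYMinus_def] at hneg
    have hy₀pos : 0 < y₀ := hy₀.1
    have hD₀ : 0 < s y₀ - s (-z) := denom_pos hmono hs0 hy₀pos hz
    have hN₀ : cY s ν y₀ - cY s ν (-z) < 0 := by
      rcases div_neg_iff.1 hneg with ⟨_, hD'⟩ | ⟨hN, _⟩
      · linarith
      · exact hN
    have hD₁ : s y₀ - s (-z) < s (y₀ + 1) - s (-z) := by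
      have : s y₀ < s (y₀ + 1) := hmono (lt_add_one y₀)
      linarith
    have hN₁ : cY s ν y₀ - cY s ν (-z) ≤ cY s ν (y₀ + 1) - cY s ν (-z) := by
      have := (cY_incr_pos (ν := ν) hs hmono hs0 hy₀pos.le (le_of_lt (lt_add_one y₀))).1
      linarith
    have hle := hy₀.2 (y₀ + 1) (by linarith)
    rw [slopeYMinus_def, slopeYMinus_def] at hle
    rw [div_le_div_iff₀ (by linarith) hD₀] at hle
    nlinarith
  · rw [zetaMinus, if_neg h]

lemma zetaPlus_le_one (hs : Continuous s) (hmono : StrictMono s) (hs0 : s 0 = 0)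
    [IsProbabilityMeasure ν] {z : ℝ} (hz : 0 < z) : zetaPlus s ν z ≤ 1 := by
  by_cases h : (argYPlus s ν z).Nonempty
  · obtain ⟨y₀, hy₀⟩ := h
    rw [zetaPlus_eq hy₀, slopeYPlus_def, ← neg_div, neg_sub]
    have hy₀pos : 0 < y₀ := hy₀.1
    have hD₀ : 0 < s z - s (-y₀) := denom_pos hmono hs0 hz hy₀pos
    rw [div_le_one hD₀]
    have h1 : cY s ν (-y₀) ≤ |s (-y₀)| := cY_le_neg hs (neg_lt_zero.2 hy₀pos)
    have h2 : 0 ≤ cY s ν z := cY_nonneg hmono hs0 z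
    have h3 : |s (-y₀)| = -s (-y₀) := abs_of_neg (s_neg' hmono hs0 hy₀pos)
    have h4 : 0 < s z := s_pos' hmono hs0 hz
    linarith
  · rw [zetaPlus, if_neg h]; norm_num

lemma zetaMinus_le_one (hs : Continuous s) (hmono : StrictMono s) (hs0 : s 0 = 0)
    [IsProbabilityMeasure ν] {z : ℝ} (hz : 0 < z) : zetaMinus s ν z ≤ 1 := by
  by_cases h : (argYMinus s ν z).Nonempty
  · obtain ⟨y₀, hy₀⟩ := h
    rw [zetaMinus_eq hy₀, slopeYMinus_def]
    have hy₀pos : 0 < y₀ := hy₀.1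
    have hD₀ : 0 < s y₀ - s (-z) := denom_pos hmono hs0 hy₀pos hz
    rw [div_le_one hD₀]
    have h1 : cY s ν y₀ ≤ s y₀ := cY_le_pos hs hmono hs0 hy₀pos.le
    have h2 : 0 ≤ cY s ν (-z) := cY_nonneg hmono hs0 _
    have h4 : s (-z) < 0 := s_neg' hmono hs0 hz
    linarith
  · rw [zetaMinus, if_neg h]; norm_num

end Zeta

section ZetaBounds

variable {s : ℝ → ℝ} {ν : Measure ℝ}

lemma zetaPlus_le_bound (hs : Continuous s) (hmono : StrictMono s) (hs0 : s 0 = 0)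
    [IsProbabilityMeasure ν] {z : ℝ} (hz : 0 < z) :
    zetaPlus s ν z ≤
      max (cY s ν (-z) - cY s ν z) 0 / s z + (ν (Iio (-z))).toReal := by
  have hsz : 0 < s z := s_pos' hmono hs0 hz
  have hRHS0 : 0 ≤ max (cY s ν (-z) - cY s ν z) 0 / s z + (ν (Iio (-z))).toReal :=
    add_nonneg (div_nonneg (le_max_right _ _) hsz.le) ENNReal.toReal_nonneg
  by_cases h : (argYPlus s ν z).Nonempty
  swap
  · rw [zetaPlus, if_neg h]; exact hRHS0
  obtain ⟨y₀, hy₀⟩ := h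
  have hy₀pos : 0 < y₀ := hy₀.1
  have hD₀ : 0 < s z - s (-y₀) := denom_pos hmono hs0 hz hy₀pos
  rw [zetaPlus_eq hy₀, slopeYPlus_def, ← neg_div, neg_sub]
  rcases le_or_gt y₀ z with hyz | hyz
  · rcases le_or_gt (cY s ν (-y₀) - cY s ν z) 0 with hnum | hnum
    · exact le_trans (div_nonpos_of_nonpos_of_nonneg hnum hD₀.le) hRHS0
    · have hb : cY s ν (-y₀) ≤ cY s ν (-z) := by
        have := (cY_incr_neg (ν := ν) hs hmono hs0 hy₀pos hyz).1; linarith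
      have hsny : s (-y₀) < 0 := s_neg' hmono hs0 hy₀pos
      have h1 : (cY s ν (-y₀) - cY s ν z) / (s z - s (-y₀)) ≤
          (cY s ν (-y₀) - cY s ν z) / s z := by
        apply div_le_div_of_nonneg_left hnum.le hsz
        linarith
      have h2 : (cY s ν (-y₀) - cY s ν z) / s z ≤
          max (cY s ν (-z) - cY s ν z) 0 / s z :=
        (div_le_div_iff_of_pos_right hsz).2 (le_trans (by linarith) (le_max_left _ _))
      linarith [ENNReal.toReal_nonneg (a := ν (Iio (-z)))]
  · -- z < y₀
    have hDz : 0 < s z - s (-z) := denom_pos hmono hs0 hz hz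
    set ζ := (cY s ν (-y₀) - cY s ν z) / (s z - s (-y₀)) with hζ
    have e1 : ζ * (s z - s (-y₀)) = cY s ν (-y₀) - cY s ν z := div_mul_cancel₀ _ hD₀.ne'
    have hslope : slopeYPlus s ν z y₀ = -ζ := by
      rw [slopeYPlus_def, hζ]; ring
    have hle := hy₀.2 z hz
    rw [hslope, slopeYPlus_def] at hle
    have hle' : -ζ * (s z - s (-z)) ≤ cY s ν z - cY s ν (-z) := (le_div_iff₀ hDz).1 hle
    have hdd : 0 < s (-z) - s (-y₀) := by
      have := hmono (show -y₀ < -z by linarith); linarith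
    have incr := (cY_incr_neg (ν := ν) hs hmono hs0 hz hyz.le).2
    have key : ζ * (s (-z) - s (-y₀)) ≤
        (s (-z) - s (-y₀)) * (ν (Iio (-z))).toReal := by nlinarith [e1, hle', incr]
    have hfin : ζ ≤ (ν (Iio (-z))).toReal :=
      le_of_mul_le_mul_right (by nlinarith [key]) hdd
    have : 0 ≤ max (cY s ν (-z) - cY s ν z) 0 / s z :=
      div_nonneg (le_max_right _ _) hsz.le
    linarith

lemma zetaMinus_le_bound (hs : Continuous s) (hmono : StrictMono s) (hs0 : s 0 = 0)
    [IsProbabilityMeasure ν] {z : ℝ} (hz : 0 < z) :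
    zetaMinus s ν z ≤
      max (cY s ν z - cY s ν (-z)) 0 / (-s (-z)) + (ν (Ioi z)).toReal := by
  have hsz : 0 < s z := s_pos' hmono hs0 hz
  have hsnz : s (-z) < 0 := s_neg' hmono hs0 hz
  have hRHS0 : 0 ≤ max (cY s ν z - cY s ν (-z)) 0 / (-s (-z)) + (ν (Ioi z)).toReal :=
    add_nonneg (div_nonneg (le_max_right _ _) (by linarith)) ENNReal.toReal_nonneg
  by_cases h : (argYMinus s ν z).Nonempty
  swap
  · rw [zetaMinus, if_neg h]; exact hRHS0
  obtain ⟨y₀, hy₀⟩ := h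
  have hy₀pos : 0 < y₀ := hy₀.1
  have hD₀ : 0 < s y₀ - s (-z) := denom_pos hmono hs0 hy₀pos hz
  rw [zetaMinus_eq hy₀, slopeYMinus_def]
  rcases le_or_gt y₀ z with hyz | hyz
  · rcases le_or_gt (cY s ν y₀ - cY s ν (-z)) 0 with hnum | hnum
    · exact le_trans (div_nonpos_of_nonpos_of_nonneg hnum hD₀.le) hRHS0
    · have ha : cY s ν y₀ ≤ cY s ν z := by
        have := (cY_incr_pos (ν := ν) hs hmono hs0 hy₀pos.le hyz).1; linarith
      have hsy : 0 < s y₀ := s_pos' hmono hs0 hy₀pos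
      have h1 : (cY s ν y₀ - cY s ν (-z)) / (s y₀ - s (-z)) ≤
          (cY s ν y₀ - cY s ν (-z)) / (-s (-z)) := by
        apply div_le_div_of_nonneg_left hnum.le (by linarith)
        linarith
      have h2 : (cY s ν y₀ - cY s ν (-z)) / (-s (-z)) ≤
          max (cY s ν z - cY s ν (-z)) 0 / (-s (-z)) :=
        (div_le_div_iff_of_pos_right (show (0:ℝ) < -s (-z) by linarith)).2
          (le_trans (by linarith) (le_max_left _ _))
      linarith [ENNReal.toReal_nonneg (a := ν (Ioi z))]
  · -- z < y₀
    have hDz : 0 < s z - s (-z) := denom_pos hmono hs0 hz hz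
    set ζ := (cY s ν y₀ - cY s ν (-z)) / (s y₀ - s (-z)) with hζ
    have e1 : ζ * (s y₀ - s (-z)) = cY s ν y₀ - cY s ν (-z) := div_mul_cancel₀ _ hD₀.ne'
    have hle := hy₀.2 z hz
    rw [slopeYMinus_def] at hle
    have hslope : slopeYMinus s ν z y₀ = ζ := by rw [slopeYMinus_def, hζ]
    rw [hslope] at hle
    have hle' : cY s ν z - cY s ν (-z) ≤ ζ * (s z - s (-z)) := (div_le_iff₀ hDz).1 hle
    have hdd : 0 < s y₀ - s z := by have := hmono hyz; linarith
    have incr := (cY_incr_pos (ν := ν) hs hmono hs0 hz.le hyz.le).2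
    have key : ζ * (s y₀ - s z) ≤ (s y₀ - s z) * (ν (Ioi z)).toReal := by
      nlinarith [e1, hle', incr]
    have hfin : ζ ≤ (ν (Ioi z)).toReal :=
      le_of_mul_le_mul_right (by nlinarith [key]) hdd
    have : 0 ≤ max (cY s ν z - cY s ν (-z)) 0 / (-s (-z)) :=
      div_nonneg (le_max_right _ _) (by linarith)
    linarith

end ZetaBounds

section Delta

variable {s : ℝ → ℝ} {ν : Measure ℝ}

/-- Key lower bound: `Δc(z)⁺` is controlled by `ζ₋(z)` plus the upper tail. -/
lemma delta_plus_le (hs : Continuous s) (hmono : StrictMono s) (hs0 : s 0 = 0)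
    [IsProbabilityMeasure ν] {z : ℝ} (hz : 0 < z) :
    cY s ν z - cY s ν (-z) ≤
      (zetaMinus s ν z + (ν (Ioi z)).toReal) * (s z - s (-z)) := by
  have hsz : 0 < s z := s_pos' hmono hs0 hz
  have hsnz : s (-z) < 0 := s_neg' hmono hs0 hz
  have hDz : 0 < s z - s (-z) := by linarith
  by_cases h : (argYMinus s ν z).Nonempty
  · have h1 : slopeYMinus s ν z z ≤ zetaMinus s ν z := slopeYMinus_le_zetaMinus hz h
    rw [slopeYMinus_def] at h1
    have h2 : cY s ν z - cY s ν (-z) =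
        ((cY s ν z - cY s ν (-z)) / (s z - s (-z))) * (s z - s (-z)) :=
      (div_mul_cancel₀ _ hDz.ne').symm
    rw [h2]
    apply mul_le_mul_of_nonneg_right _ hDz.le
    linarith [ENNReal.toReal_nonneg (a := ν (Ioi z))]
  · rw [zetaMinus, if_neg h, zero_add]
    by_contra hcon
    push_neg at hcon
    set β := (ν (Ioi z)).toReal with hβ
    have hβ0 : 0 ≤ β := ENNReal.toReal_nonneg
    set L := slopeYMinus s ν z z with hL
    have hLval : L = (cY s ν z - cY s ν (-z)) / (s z - s (-z)) := slopeYMinus_def ..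
    have hβL : β < L := by rw [hLval, lt_div_iff₀ hDz]; linarith
    have hLpos : 0 < L := lt_of_le_of_lt hβ0 hβL
    -- for y ≥ z, the slope is at most L
    have hge : ∀ y, z ≤ y → slopeYMinus s ν z y ≤ L := by
      intro y hy
      have hDy : 0 < s y - s (-z) := denom_pos hmono hs0 (hz.trans_le hy) hz
      have hincr := (cY_incr_pos (ν := ν) hs hmono hs0 hz.le hy).2
      have ht : 0 ≤ s y - s z := sub_nonneg.2 (hmono.monotone hy)
      rw [slopeYMinus_def, hLval, div_le_div_iff₀ hDy hDz]
      nlinarith [mul_le_mul_of_nonneg_left hcon.le ht]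
    -- generic upper bound for small y
    have hbound0 : ∀ y, 0 < y → slopeYMinus s ν z y ≤ s y / (-s (-z)) := by
      intro y hy
      have hDy : 0 < s y - s (-z) := denom_pos hmono hs0 hy hz
      have hsy : 0 < s y := s_pos' hmono hs0 hy
      rcases le_or_gt (cY s ν y - cY s ν (-z)) 0 with hnum | hnum
      · rw [slopeYMinus_def]
        exact le_trans (div_nonpos_of_nonpos_of_nonneg hnum hDy.le)
          (div_nonneg hsy.le (by linarith))
      · rw [slopeYMinus_def]
        apply div_le_div₀ hsy.le ?_ (by linarith) (by linarith)
        have h1 : cY s ν y ≤ s y := cY_le_pos hs hmono hs0 hy.le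
        have h2 : 0 ≤ cY s ν (-z) := cY_nonneg hmono hs0 _
        linarith
    -- choose η via continuity of s at 0
    have hεpos : 0 < L * (-s (-z)) := mul_pos hLpos (by linarith)
    obtain ⟨δ, hδpos, hδ⟩ := Metric.continuous_iff.1 hs 0 (L * (-s (-z))) hεpos
    set η := min δ z with hη
    have hηpos : 0 < η := lt_min hδpos hz
    have hηz : η ≤ z := min_le_right δ z
    have hsmally : ∀ y, 0 < y → y < η → slopeYMinus s ν z y < L := by
      intro y hy hyη
      have h1 : dist y 0 < δ := by
        rw [Real.dist_eq, sub_zero, abs_of_pos hy]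
        exact hyη.trans_le (min_le_left δ z)
      have h2 : s y < L * (-s (-z)) := by
        have := hδ y h1
        rw [Real.dist_eq, hs0, sub_zero] at this
        exact (le_abs_self _).trans_lt this
      calc slopeYMinus s ν z y ≤ s y / (-s (-z)) := hbound0 y hy
        _ < (L * (-s (-z))) / (-s (-z)) :=
            (div_lt_div_iff_of_pos_right (show (0:ℝ) < -s (-z) by linarith)).2 h2
        _ = L := mul_div_cancel_right₀ _ (by linarith)
    -- compactness: max attained on [η, z]
    have hcomp : ContinuousOn (fun y => (cY s ν y - cY s ν (-z)) / (s y - s (-z)))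
        (Icc η z) := by
      apply ContinuousOn.div
      · exact (((cY_contOn_pos hs hmono hs0).mono
          (fun x hx => le_trans hηpos.le hx.1)).sub continuousOn_const)
      · exact (hs.continuousOn.sub continuousOn_const)
      · intro x hx
        exact (denom_pos hmono hs0 (lt_of_lt_of_le hηpos hx.1) hz).ne'
    obtain ⟨y₀, hy₀mem, hy₀max⟩ := isCompact_Icc.exists_isMaxOn ⟨z, hηz, le_refl z⟩ hcomp
    refine h ⟨y₀, lt_of_lt_of_le hηpos hy₀mem.1, fun x hx => ?_⟩
    have hmaxz : L ≤ slopeYMinus s ν z y₀ := by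
      have := hy₀max (show z ∈ Icc η z from ⟨hηz, le_refl z⟩)
      rw [hLval]
      simpa [slopeYMinus_def] using this
    rcases lt_or_ge x η with hxη | hxη
    · exact le_trans (hsmally x hx hxη).le hmaxz
    · rcases le_or_gt x z with hxz | hxz
      · have := hy₀max (show x ∈ Icc η z from ⟨hxη, hxz⟩)
        rw [slopeYMinus_def, slopeYMinus_def]
        simpa using this
      · exact le_trans (hge x hxz.le) hmaxz

end Delta

section Delta2

variable {s : ℝ → ℝ} {ν : Measure ℝ}

lemma delta_minus_le (hs : Continuous s) (hmono : StrictMono s) (hs0 : s 0 = 0)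
    [IsProbabilityMeasure ν] {z : ℝ} (hz : 0 < z) :
    cY s ν (-z) - cY s ν z ≤
      (zetaPlus s ν z + (ν (Iio (-z))).toReal) * (s z - s (-z)) := by
  have hsz : 0 < s z := s_pos' hmono hs0 hz
  have hsnz : s (-z) < 0 := s_neg' hmono hs0 hz
  have hDz : 0 < s z - s (-z) := by linarith
  by_cases h : (argYPlus s ν z).Nonempty
  · have h1 : -zetaPlus s ν z ≤ slopeYPlus s ν z z := neg_zetaPlus_le_slopeYPlus hz h
    rw [slopeYPlus_def] at h1
    have h2 : cY s ν (-z) - cY s ν z =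
        (-((cY s ν z - cY s ν (-z)) / (s z - s (-z)))) * (s z - s (-z)) := by
      rw [neg_mul, div_mul_cancel₀ _ hDz.ne']; ring
    rw [h2]
    apply mul_le_mul_of_nonneg_right _ hDz.le
    linarith [ENNReal.toReal_nonneg (a := ν (Iio (-z)))]
  · rw [zetaPlus, if_neg h, zero_add]
    by_contra hcon
    push_neg at hcon
    set β := (ν (Iio (-z))).toReal with hβ
    have hβ0 : 0 ≤ β := ENNReal.toReal_nonneg
    set L := slopeYPlus s ν z z with hL
    have hLval : L = (cY s ν z - cY s ν (-z)) / (s z - s (-z)) := slopeYPlus_def ..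
    have hβL : L < -β := by rw [hLval, div_lt_iff₀ hDz]; nlinarith
    have hLneg : L < 0 := lt_of_lt_of_le hβL (by linarith)
    have hge : ∀ y, z ≤ y → L ≤ slopeYPlus s ν z y := by
      intro y hy
      have hDy : 0 < s z - s (-y) := denom_pos hmono hs0 hz (hz.trans_le hy)
      have hincr := (cY_incr_neg (ν := ν) hs hmono hs0 hz hy).2
      have ht : 0 ≤ s (-z) - s (-y) := sub_nonneg.2 (hmono.monotone (by linarith))
      rw [slopeYPlus_def, hLval, div_le_div_iff₀ hDz hDy]
      nlinarith [mul_le_mul_of_nonneg_left hcon.le ht,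
        mul_le_mul_of_nonneg_right hincr hDz.le]
    have hbound0 : ∀ y, 0 < y → s (-y) / s z ≤ slopeYPlus s ν z y := by
      intro y hy
      have hDy : 0 < s z - s (-y) := denom_pos hmono hs0 hz hy
      have hsy : s (-y) < 0 := s_neg' hmono hs0 hy
      rcases le_or_gt 0 (cY s ν z - cY s ν (-y)) with hnum | hnum
      · rw [slopeYPlus_def]
        exact le_trans (div_nonpos_of_nonpos_of_nonneg hsy.le hsz.le)
          (div_nonneg hnum hDy.le)
      · rw [slopeYPlus_def]
        have e1 : (cY s ν z - cY s ν (-y)) / (s z - s (-y)) =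
            -((cY s ν (-y) - cY s ν z) / (s z - s (-y))) := by ring
        have e2 : s (-y) / s z = -((-s (-y)) / s z) := by ring
        rw [e1, e2, neg_le_neg_iff]
        apply div_le_div₀ (by linarith) ?_ hsz (by linarith)
        have h1 : cY s ν (-y) ≤ -s (-y) := by
          have := cY_le_neg (ν := ν) hs (neg_lt_zero.2 hy)
          rwa [abs_of_neg hsy] at this
        have h2 : 0 ≤ cY s ν z := cY_nonneg hmono hs0 _
        linarith
    have hεpos : 0 < (-L) * s z := mul_pos (by linarith) hsz
    obtain ⟨δ, hδpos, hδ⟩ := Metric.continuous_iff.1 hs 0 ((-L) * s z) hεpos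
    set η := min δ z with hη
    have hηpos : 0 < η := lt_min hδpos hz
    have hηz : η ≤ z := min_le_right δ z
    have hsmally : ∀ y, 0 < y → y < η → L < slopeYPlus s ν z y := by
      intro y hy hyη
      have h1 : dist (-y) 0 < δ := by
        rw [Real.dist_eq, sub_zero, abs_neg, abs_of_pos hy]
        exact hyη.trans_le (min_le_left δ z)
      have h2 : -(s (-y)) < (-L) * s z := by
        have := hδ (-y) h1
        rw [Real.dist_eq, hs0, sub_zero] at this
        exact lt_of_le_of_lt (neg_le_abs _) this
      calc L = -(((-L) * s z) / s z) := by rw [mul_div_cancel_right₀ _ hsz.ne']; ring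
        _ < -((-(s (-y))) / s z) := by
            rw [neg_lt_neg_iff]
            exact (div_lt_div_iff_of_pos_right hsz).2 h2
        _ = s (-y) / s z := by ring
        _ ≤ slopeYPlus s ν z y := hbound0 y hy
    have hcomp : ContinuousOn (fun y => (cY s ν z - cY s ν (-y)) / (s z - s (-y)))
        (Icc η z) := by
      apply ContinuousOn.div
      · exact continuousOn_const.sub ((cY_contOn_neg hs hmono hs0).mono
          (fun x hx => lt_of_lt_of_le hηpos hx.1))
      · exact continuousOn_const.sub ((hs.comp continuous_neg).continuousOn)
      · intro x hx
        exact (denom_pos hmono hs0 hz (lt_of_lt_of_le hηpos hx.1)).ne'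
    obtain ⟨y₀, hy₀mem, hy₀min⟩ := isCompact_Icc.exists_isMinOn ⟨z, hηz, le_refl z⟩ hcomp
    refine h ⟨y₀, lt_of_lt_of_le hηpos hy₀mem.1, fun x hx => ?_⟩
    have hminz : slopeYPlus s ν z y₀ ≤ L := by
      have := hy₀min (show z ∈ Icc η z from ⟨hηz, le_refl z⟩)
      rw [hLval]
      simpa [slopeYPlus_def] using this
    rcases lt_or_ge x η with hxη | hxη
    · exact le_trans hminz (hsmally x hx hxη).le
    · rcases le_or_gt x z with hxz | hxz
      · have := hy₀min (show x ∈ Icc η z from ⟨hxη, hxz⟩)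
        rw [slopeYPlus_def, slopeYPlus_def]
        simpa using this
      · exact le_trans hminz (hge x hxz.le)

end Delta2

section NuSum

variable {s : ℝ → ℝ} {ν : Measure ℝ}

lemma nu_sum_nonneg (hs : Continuous s) (hmono : StrictMono s) (hs0 : s 0 = 0)
    [IsProbabilityMeasure ν] {z : ℝ} (hz : 0 < z) :
    0 ≤ nuPlus s ν z + nuMinus s ν z := by
  rw [nuPlus, nuMinus]
  have h1 := zetaPlus_nonneg (ν := ν) hs hmono hs0 hz
  have h2 := zetaMinus_nonneg (ν := ν) hs hmono hs0 hz
  have h3 : (0:ℝ) ≤ (ν (Ici z)).toReal := ENNReal.toReal_nonneg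
  have h4 : (0:ℝ) ≤ (ν (Iic (-z))).toReal := ENNReal.toReal_nonneg
  linarith

lemma nu_sum_le_four (hs : Continuous s) (hmono : StrictMono s) (hs0 : s 0 = 0)
    [IsProbabilityMeasure ν] {z : ℝ} (hz : 0 < z) :
    nuPlus s ν z + nuMinus s ν z ≤ 4 := by
  rw [nuPlus, nuMinus]
  have h1 := zetaPlus_le_one (ν := ν) hs hmono hs0 hz
  have h2 := zetaMinus_le_one (ν := ν) hs hmono hs0 hz
  have h3 := toReal_prob_le_one (ν := ν) (Ici z)
  have h4 := toReal_prob_le_one (ν := ν) (Iic (-z))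
  linarith

lemma nu_sum_le_main (hs : Continuous s) (hmono : StrictMono s) (hs0 : s 0 = 0)
    [IsProbabilityMeasure ν] {k r : ℝ} (hk : 0 < k)
    (hb : ∀ y : ℝ, 1 ≤ |y| → k * |y| ^ r ≤ |s y|) {z : ℝ} (hz : 1 ≤ z) :
    nuPlus s ν z + nuMinus s ν z ≤
      |cY s ν z - cY s ν (-z)| / (k * z ^ r) +
        2 * ((ν (Ici z)).toReal + (ν (Iic (-z))).toReal) := by
  have hz0 : 0 < z := lt_of_lt_of_le one_pos hz
  have hsz : 0 < s z := s_pos' hmono hs0 hz0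
  have hsnz : s (-z) < 0 := s_neg' hmono hs0 hz0
  have hkzr : 0 < k * z ^ r := mul_pos hk (Real.rpow_pos_of_pos hz0 r)
  have hb1 : k * z ^ r ≤ s z := by
    have := hb z (by rwa [abs_of_pos hz0])
    rwa [abs_of_pos hz0, abs_of_pos hsz] at this
  have hb2 : k * z ^ r ≤ -s (-z) := by
    have := hb (-z) (by rwa [abs_neg, abs_of_pos hz0])
    rwa [abs_neg, abs_of_pos hz0, abs_of_neg hsnz] at this
  have hζp := zetaPlus_le_bound (ν := ν) hs hmono hs0 hz0
  have hζm := zetaMinus_le_bound (ν := ν) hs hmono hs0 hz0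
  have e1 : max (cY s ν (-z) - cY s ν z) 0 / s z ≤
      max (cY s ν (-z) - cY s ν z) 0 / (k * z ^ r) :=
    div_le_div_of_nonneg_left (le_max_right _ _) hkzr hb1
  have e2 : max (cY s ν z - cY s ν (-z)) 0 / (-s (-z)) ≤
      max (cY s ν z - cY s ν (-z)) 0 / (k * z ^ r) :=
    div_le_div_of_nonneg_left (le_max_right _ _) hkzr hb2
  have emax : max (cY s ν (-z) - cY s ν z) 0 + max (cY s ν z - cY s ν (-z)) 0 =
      |cY s ν z - cY s ν (-z)| := by
    rcases le_total (cY s ν z - cY s ν (-z)) 0 with h | h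
    · rw [max_eq_left (by linarith), max_eq_right h, abs_of_nonpos h]; ring
    · rw [max_eq_right (by linarith), max_eq_left h, abs_of_nonneg h]; ring
  have esum : max (cY s ν (-z) - cY s ν z) 0 / (k * z ^ r) +
      max (cY s ν z - cY s ν (-z)) 0 / (k * z ^ r) =
      |cY s ν z - cY s ν (-z)| / (k * z ^ r) := by
    rw [← add_div, emax]
  have t1 : (ν (Iio (-z))).toReal ≤ (ν (Iic (-z))).toReal :=
    ENNReal.toReal_mono (measure_ne_top _ _) (measure_mono Iio_subset_Iic_self)
  have t2 : (ν (Ioi z)).toReal ≤ (ν (Ici z)).toReal :=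
    ENNReal.toReal_mono (measure_ne_top _ _) (measure_mono Ioi_subset_Ici_self)
  rw [nuPlus, nuMinus]
  have h3 : (0:ℝ) ≤ (ν (Ici z)).toReal := ENNReal.toReal_nonneg
  have h4 : (0:ℝ) ≤ (ν (Iic (-z))).toReal := ENNReal.toReal_nonneg
  linarith

lemma abs_delta_le (hs : Continuous s) (hmono : StrictMono s) (hs0 : s 0 = 0)
    [IsProbabilityMeasure ν] {z : ℝ} (hz : 0 < z) :
    |cY s ν z - cY s ν (-z)| ≤
      (nuPlus s ν z + nuMinus s ν z) * (s z - s (-z)) := by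
  have hsz : 0 < s z := s_pos' hmono hs0 hz
  have hsnz : s (-z) < 0 := s_neg' hmono hs0 hz
  have hDz : 0 < s z - s (-z) := by linarith
  have hζp := zetaPlus_nonneg (ν := ν) hs hmono hs0 hz
  have hζm := zetaMinus_nonneg (ν := ν) hs hmono hs0 hz
  have t1 : (ν (Iio (-z))).toReal ≤ (ν (Iic (-z))).toReal :=
    ENNReal.toReal_mono (measure_ne_top _ _) (measure_mono Iio_subset_Iic_self)
  have t2 : (ν (Ioi z)).toReal ≤ (ν (Ici z)).toReal :=
    ENNReal.toReal_mono (measure_ne_top _ _) (measure_mono Ioi_subset_Ici_self)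
  have h3 : (0:ℝ) ≤ (ν (Ici z)).toReal := ENNReal.toReal_nonneg
  have h4 : (0:ℝ) ≤ (ν (Iic (-z))).toReal := ENNReal.toReal_nonneg
  rw [abs_le]
  constructor
  · have := delta_minus_le (ν := ν) hs hmono hs0 hz
    have hc : zetaPlus s ν z + (ν (Iio (-z))).toReal ≤
        nuPlus s ν z + nuMinus s ν z := by rw [nuPlus, nuMinus]; linarith
    nlinarith [mul_le_mul_of_nonneg_right hc hDz.le]
  · have := delta_plus_le (ν := ν) hs hmono hs0 hz
    have hc : zetaMinus s ν z + (ν (Ioi z)).toReal ≤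
        nuPlus s ν z + nuMinus s ν z := by rw [nuPlus, nuMinus]; linarith
    nlinarith [mul_le_mul_of_nonneg_right hc hDz.le]

end NuSum

/-- Theorem 4(iii) of the paper: case `r ≤ p ≤ q` under the polynomial
growth bounds `k|y|^r ≤ |s(y)| ≤ K|y|^q` for `|y| ≥ 1`; when `r = q` the sufficient and
necessary conditions coincide, giving an equivalence. -/
theorem Hp_embedding_polynomial_scale_r_le_p_le_q
    (s : ℝ → ℝ) (hs : Continuous s) (hmono : StrictMono s) (hs0 : s 0 = 0)
    (ν : Measure ℝ) [IsProbabilityMeasure ν] (hν0 : ν {0} = 0)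
    (p q r k K : ℝ) (hp : 0 < p) (hk : 0 < k) (hK : 0 < K)
    (hr : 0 ≤ r) (hrp : r ≤ p) (hpq : p ≤ q)
    (hbound : ∀ y : ℝ, 1 ≤ |y| → k * |y| ^ r ≤ |s y| ∧ |s y| ≤ K * |y| ^ q) :
    ((∫⁻ y, ENNReal.ofReal (|y| ^ p) ∂ν < ⊤ ∧
        ∫⁻ y in Ici (1 : ℝ), ENNReal.ofReal
          (y ^ (p - r - 1) * |cY s ν y - cY s ν (-y)|) < ⊤) →
      ∫⁻ z in Ioi (0 : ℝ), ENNReal.ofReal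
        (z ^ (p - 1) * (nuPlus s ν z + nuMinus s ν z)) < ⊤) ∧
    ((∫⁻ z in Ioi (0 : ℝ), ENNReal.ofReal
        (z ^ (p - 1) * (nuPlus s ν z + nuMinus s ν z)) < ⊤) →
      ∫⁻ y, ENNReal.ofReal (|y| ^ p) ∂ν < ⊤ ∧
        ∫⁻ y in Ici (1 : ℝ), ENNReal.ofReal
          (y ^ (p - q - 1) * |cY s ν y - cY s ν (-y)|) < ⊤) ∧
    (r = q →
      ((∫⁻ y, ENNReal.ofReal (|y| ^ p) ∂ν < ⊤ ∧
          ∫⁻ y in Ici (1 : ℝ), ENNReal.ofReal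
            (y ^ (p - r - 1) * |cY s ν y - cY s ν (-y)|) < ⊤) ↔
        ∫⁻ z in Ioi (0 : ℝ), ENNReal.ofReal
          (z ^ (p - 1) * (nuPlus s ν z + nuMinus s ν z)) < ⊤)) := by
  set M := ∫⁻ t in Ioi (0:ℝ), ν {a | t ≤ |a|} * ENNReal.ofReal (t ^ (p - 1)) with hMdef
  have layer : ∫⁻ y, ENNReal.ofReal (|y| ^ p) ∂ν = ENNReal.ofReal p * M :=
    lintegral_rpow_eq_lintegral_meas_le_mul ν (Eventually.of_forall fun y => abs_nonneg y)
      measurable_abs.aemeasurable hp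
  have hofp0 : (ENNReal.ofReal p) ≠ 0 := by
    simp only [ne_eq, ENNReal.ofReal_eq_zero, not_le]; exact hp
  have hsub1 : ∀ z : ℝ, 0 < z → Ici z ⊆ {a : ℝ | z ≤ |a|} := by
    intro z hz a ha
    exact le_trans ha (le_abs_self a)
  have hsub2 : ∀ z : ℝ, 0 < z → Iic (-z) ⊆ {a : ℝ | z ≤ |a|} := by
    intro z hz a ha
    have h1 : z ≤ -a := by rw [mem_Iic] at ha; linarith
    exact le_trans h1 (neg_le_abs a)
  have hsetsplit : ∀ z : ℝ, 0 < z → {a : ℝ | z ≤ |a|} ⊆ Iic (-z) ∪ Ici z := by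
    intro z hz a ha
    rcases le_total 0 a with h | h
    · right; rw [mem_setOf_eq, abs_of_nonneg h] at ha; exact ha
    · left; rw [mem_setOf_eq, abs_of_nonpos h] at ha; rw [mem_Iic]; linarith
  -- FORWARD
  have forward : (∫⁻ y, ENNReal.ofReal (|y| ^ p) ∂ν < ⊤ ∧
      ∫⁻ y in Ici (1 : ℝ), ENNReal.ofReal
        (y ^ (p - r - 1) * |cY s ν y - cY s ν (-y)|) < ⊤) →
      ∫⁻ z in Ioi (0 : ℝ), ENNReal.ofReal
        (z ^ (p - 1) * (nuPlus s ν z + nuMinus s ν z)) < ⊤ := by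
    rintro ⟨hA, hB⟩
    have hMfin : M < ⊤ := by
      by_contra hcontr
      rw [not_lt, top_le_iff] at hcontr
      rw [layer, hcontr, ENNReal.mul_top hofp0] at hA
      exact absurd hA (lt_irrefl ⊤)
    have hsplit : (∫⁻ z in Ioi (0:ℝ),
          ENNReal.ofReal (z ^ (p - 1) * (nuPlus s ν z + nuMinus s ν z)))
        = (∫⁻ z in Ioc (0:ℝ) 1,
            ENNReal.ofReal (z ^ (p - 1) * (nuPlus s ν z + nuMinus s ν z)))
          + ∫⁻ z in Ioi (1:ℝ),
            ENNReal.ofReal (z ^ (p - 1) * (nuPlus s ν z + nuMinus s ν z)) := by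
      rw [← lintegral_union measurableSet_Ioi (Ioc_disjoint_Ioi le_rfl),
        Ioc_union_Ioi_eq_Ioi zero_le_one]
    rw [hsplit]
    refine ENNReal.add_lt_top.2 ⟨?_, ?_⟩
    · calc ∫⁻ z in Ioc (0:ℝ) 1,
            ENNReal.ofReal (z ^ (p - 1) * (nuPlus s ν z + nuMinus s ν z))
          ≤ ∫⁻ z in Ioc (0:ℝ) 1, ENNReal.ofReal (z ^ (p - 1) * 4) := by
            apply setLIntegral_mono' measurableSet_Ioc
            intro z hz
            exact ENNReal.ofReal_le_ofReal (mul_le_mul_of_nonneg_left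
              (nu_sum_le_four hs hmono hs0 hz.1) (Real.rpow_nonneg hz.1.le _))
        _ < ⊤ := by
            have hint : IntegrableOn (fun z : ℝ => z ^ (p - 1) * 4) (Ioc 0 1) volume := by
              have h1 := (intervalIntegral.intervalIntegrable_rpow' (a := 0) (b := 1)
                (show (-1:ℝ) < p - 1 by linarith)).mul_const (c := (4:ℝ))
              rwa [intervalIntegrable_iff, uIoc_of_le zero_le_one] at h1
            exact Integrable.lintegral_lt_top hint
    · have hpoint : ∀ z ∈ Ioi (1:ℝ),
          ENNReal.ofReal (z ^ (p - 1) * (nuPlus s ν z + nuMinus s ν z)) ≤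
            ENNReal.ofReal ((1/k) * (z ^ (p - r - 1) * |cY s ν z - cY s ν (-z)|)) +
            ENNReal.ofReal (2 * (z ^ (p - 1) *
              ((ν (Ici z)).toReal + (ν (Iic (-z))).toReal))) := by
        intro z hz
        have hz1 : (1:ℝ) ≤ z := le_of_lt hz
        have hz0 : (0:ℝ) < z := lt_trans one_pos hz
        have hn1 : 0 ≤ (1/k) * (z ^ (p - r - 1) * |cY s ν z - cY s ν (-z)|) :=
          mul_nonneg (div_nonneg zero_le_one hk.le)
            (mul_nonneg (Real.rpow_nonneg hz0.le _) (abs_nonneg _))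
        rw [← ENNReal.ofReal_add hn1 (by positivity)]
        apply ENNReal.ofReal_le_ofReal
        have hmain := nu_sum_le_main (ν := ν) hs hmono hs0 hk
          (fun y hy => (hbound y hy).1) hz1
        have hzr : (0:ℝ) < z ^ r := Real.rpow_pos_of_pos hz0 r
        have hzp : (0:ℝ) ≤ z ^ (p-1) := (Real.rpow_pos_of_pos hz0 _).le
        have hexp : z ^ (p - r - 1) = z ^ (p - 1) / z ^ r := by
          rw [← Real.rpow_sub hz0]; congr 1; ring
        calc z ^ (p - 1) * (nuPlus s ν z + nuMinus s ν z)
            ≤ z ^ (p - 1) * (|cY s ν z - cY s ν (-z)| / (k * z ^ r) +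
                2 * ((ν (Ici z)).toReal + (ν (Iic (-z))).toReal)) :=
              mul_le_mul_of_nonneg_left hmain hzp
          _ = (1/k) * (z ^ (p - r - 1) * |cY s ν z - cY s ν (-z)|) +
              2 * (z ^ (p - 1) * ((ν (Ici z)).toReal + (ν (Iic (-z))).toReal)) := by
              rw [hexp]; field_simp
      have hmeas2 : Measurable (fun z : ℝ => ENNReal.ofReal (2 * (z ^ (p - 1) *
          ((ν (Ici z)).toReal + (ν (Iic (-z))).toReal)))) := by
        apply ENNReal.measurable_ofReal.comp
        apply Measurable.const_mul
        apply Measurable.mul (measurable_id'.pow_const _)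
        apply Measurable.add
        · exact Antitone.measurable (fun a b hab => ENNReal.toReal_mono
            (measure_ne_top _ _) (measure_mono (Ici_subset_Ici.2 hab)))
        · exact Antitone.measurable (fun a b hab => ENNReal.toReal_mono
            (measure_ne_top _ _) (measure_mono (Iic_subset_Iic.2 (neg_le_neg hab))))
      calc ∫⁻ z in Ioi (1:ℝ),
            ENNReal.ofReal (z ^ (p - 1) * (nuPlus s ν z + nuMinus s ν z))
          ≤ ∫⁻ z in Ioi (1:ℝ),
            (ENNReal.ofReal ((1/k) * (z ^ (p - r - 1) * |cY s ν z - cY s ν (-z)|)) +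
             ENNReal.ofReal (2 * (z ^ (p - 1) *
               ((ν (Ici z)).toReal + (ν (Iic (-z))).toReal)))) :=
            setLIntegral_mono' measurableSet_Ioi hpoint
        _ = (∫⁻ z in Ioi (1:ℝ),
              ENNReal.ofReal ((1/k) * (z ^ (p - r - 1) * |cY s ν z - cY s ν (-z)|))) +
            ∫⁻ z in Ioi (1:ℝ), ENNReal.ofReal (2 * (z ^ (p - 1) *
              ((ν (Ici z)).toReal + (ν (Iic (-z))).toReal))) :=
            lintegral_add_right _ hmeas2
        _ < ⊤ := by
            refine ENNReal.add_lt_top.2 ⟨?_, ?_⟩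
            · have e : ∀ z : ℝ,
                  ENNReal.ofReal ((1/k) * (z ^ (p - r - 1) * |cY s ν z - cY s ν (-z)|)) =
                  ENNReal.ofReal (1/k) *
                    ENNReal.ofReal (z ^ (p - r - 1) * |cY s ν z - cY s ν (-z)|) :=
                fun z => ENNReal.ofReal_mul (div_nonneg zero_le_one hk.le)
              calc ∫⁻ z in Ioi (1:ℝ),
                    ENNReal.ofReal ((1/k) * (z ^ (p - r - 1) * |cY s ν z - cY s ν (-z)|))
                  = ENNReal.ofReal (1/k) * ∫⁻ z in Ioi (1:ℝ),
                      ENNReal.ofReal (z ^ (p - r - 1) * |cY s ν z - cY s ν (-z)|) := by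
                    simp_rw [e]; exact lintegral_const_mul' _ _ ENNReal.ofReal_ne_top
                _ ≤ ENNReal.ofReal (1/k) * ∫⁻ z in Ici (1:ℝ),
                      ENNReal.ofReal (z ^ (p - r - 1) * |cY s ν z - cY s ν (-z)|) :=
                    mul_le_mul_right (lintegral_mono_set Ioi_subset_Ici_self) _
                _ < ⊤ := ENNReal.mul_lt_top ENNReal.ofReal_lt_top hB
            · have e2 : ∀ z ∈ Ioi (1:ℝ),
                  ENNReal.ofReal (2 * (z ^ (p - 1) *
                    ((ν (Ici z)).toReal + (ν (Iic (-z))).toReal))) ≤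
                  4 * (ν {a : ℝ | z ≤ |a|} * ENNReal.ofReal (z ^ (p-1))) := by
                intro z hz
                have hz0 : (0:ℝ) < z := lt_trans one_pos hz
                have hzp : (0:ℝ) ≤ z ^ (p-1) := (Real.rpow_pos_of_pos hz0 _).le
                rw [ENNReal.ofReal_mul (by norm_num : (0:ℝ) ≤ 2), ENNReal.ofReal_mul hzp,
                  ENNReal.ofReal_add ENNReal.toReal_nonneg ENNReal.toReal_nonneg,
                  ENNReal.ofReal_toReal (measure_ne_top _ _),
                  ENNReal.ofReal_toReal (measure_ne_top _ _)]
                have hle : ν (Ici z) + ν (Iic (-z)) ≤ 2 * ν {a : ℝ | z ≤ |a|} := by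
                  calc ν (Ici z) + ν (Iic (-z))
                      ≤ ν {a : ℝ | z ≤ |a|} + ν {a : ℝ | z ≤ |a|} :=
                        add_le_add (measure_mono (hsub1 z hz0)) (measure_mono (hsub2 z hz0))
                    _ = 2 * ν {a : ℝ | z ≤ |a|} := (two_mul _).symm
                calc ENNReal.ofReal 2 * (ENNReal.ofReal (z ^ (p-1)) *
                      (ν (Ici z) + ν (Iic (-z))))
                    ≤ ENNReal.ofReal 2 * (ENNReal.ofReal (z ^ (p-1)) *
                      (2 * ν {a : ℝ | z ≤ |a|})) :=
                      mul_le_mul_right (mul_le_mul_right hle _) _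
                  _ = 4 * (ν {a : ℝ | z ≤ |a|} * ENNReal.ofReal (z ^ (p-1))) := by
                      rw [show (ENNReal.ofReal 2) = 2 by norm_num]
                      ring
              calc ∫⁻ z in Ioi (1:ℝ), ENNReal.ofReal (2 * (z ^ (p - 1) *
                    ((ν (Ici z)).toReal + (ν (Iic (-z))).toReal)))
                  ≤ ∫⁻ z in Ioi (1:ℝ),
                      4 * (ν {a : ℝ | z ≤ |a|} * ENNReal.ofReal (z ^ (p-1))) :=
                    setLIntegral_mono' measurableSet_Ioi e2
                _ ≤ ∫⁻ z in Ioi (0:ℝ),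
                      4 * (ν {a : ℝ | z ≤ |a|} * ENNReal.ofReal (z ^ (p-1))) :=
                    lintegral_mono_set (Ioi_subset_Ioi zero_le_one)
                _ = 4 * M := lintegral_const_mul' _ _ (by norm_num)
                _ < ⊤ := ENNReal.mul_lt_top (by norm_num) hMfin
  -- BACKWARD
  have backward : (∫⁻ z in Ioi (0 : ℝ), ENNReal.ofReal
        (z ^ (p - 1) * (nuPlus s ν z + nuMinus s ν z)) < ⊤) →
      ∫⁻ y, ENNReal.ofReal (|y| ^ p) ∂ν < ⊤ ∧
        ∫⁻ y in Ici (1 : ℝ), ENNReal.ofReal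
          (y ^ (p - q - 1) * |cY s ν y - cY s ν (-y)|) < ⊤ := by
    intro hI
    constructor
    · rw [layer]
      have hMI : M ≤ ∫⁻ z in Ioi (0:ℝ),
          ENNReal.ofReal (z ^ (p - 1) * (nuPlus s ν z + nuMinus s ν z)) := by
        apply setLIntegral_mono' measurableSet_Ioi
        intro z hz
        have hz0 : (0:ℝ) < z := hz
        have hzp : (0:ℝ) ≤ z ^ (p-1) := (Real.rpow_pos_of_pos hz0 _).le
        have h1 : ν {a : ℝ | z ≤ |a|} ≤ ν (Iic (-z)) + ν (Ici z) :=
          le_trans (measure_mono (hsetsplit z hz0)) (measure_union_le _ _)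
        calc ν {a : ℝ | z ≤ |a|} * ENNReal.ofReal (z ^ (p-1))
            ≤ (ν (Iic (-z)) + ν (Ici z)) * ENNReal.ofReal (z ^ (p-1)) :=
              mul_le_mul_left h1 _
          _ = ENNReal.ofReal (z ^ (p-1) *
              ((ν (Ici z)).toReal + (ν (Iic (-z))).toReal)) := by
              rw [ENNReal.ofReal_mul hzp,
                ENNReal.ofReal_add ENNReal.toReal_nonneg ENNReal.toReal_nonneg,
                ENNReal.ofReal_toReal (measure_ne_top _ _),
                ENNReal.ofReal_toReal (measure_ne_top _ _)]
              ring
          _ ≤ ENNReal.ofReal (z ^ (p-1) * (nuPlus s ν z + nuMinus s ν z)) := by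
              apply ENNReal.ofReal_le_ofReal
              apply mul_le_mul_of_nonneg_left ?_ hzp
              rw [nuPlus, nuMinus]
              have h2 := zetaPlus_nonneg (ν := ν) hs hmono hs0 hz0
              have h3 := zetaMinus_nonneg (ν := ν) hs hmono hs0 hz0
              linarith
      exact ENNReal.mul_lt_top ENNReal.ofReal_lt_top (lt_of_le_of_lt hMI hI)
    · have hcongr : (∫⁻ y in Ici (1:ℝ), ENNReal.ofReal
          (y ^ (p - q - 1) * |cY s ν y - cY s ν (-y)|)) =
          ∫⁻ y in Ioi (1:ℝ), ENNReal.ofReal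
            (y ^ (p - q - 1) * |cY s ν y - cY s ν (-y)|) :=
        (setLIntegral_congr (Ioi_ae_eq_Ici (a := (1:ℝ)))).symm
      rw [hcongr]
      have hpoint : ∀ z ∈ Ioi (1:ℝ),
          ENNReal.ofReal (z ^ (p - q - 1) * |cY s ν z - cY s ν (-z)|) ≤
          ENNReal.ofReal (2*K) *
            ENNReal.ofReal (z ^ (p - 1) * (nuPlus s ν z + nuMinus s ν z)) := by
        intro z hz
        have hz1 : (1:ℝ) ≤ z := le_of_lt hz
        have hz0 : (0:ℝ) < z := lt_trans one_pos hz
        rw [← ENNReal.ofReal_mul (by positivity : (0:ℝ) ≤ 2*K)]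
        apply ENNReal.ofReal_le_ofReal
        have hD := abs_delta_le (ν := ν) hs hmono hs0 hz0
        have hDb : s z - s (-z) ≤ 2 * (K * z ^ q) := by
          have h1 := (hbound z (by rwa [abs_of_pos hz0])).2
          have h2 := (hbound (-z) (by rwa [abs_neg, abs_of_pos hz0])).2
          rw [abs_of_pos (s_pos' hmono hs0 hz0), abs_of_pos hz0] at h1
          rw [abs_of_neg (s_neg' hmono hs0 hz0), abs_neg, abs_of_pos hz0] at h2
          linarith
        have hnn := nu_sum_nonneg (ν := ν) hs hmono hs0 hz0
        have hexp : z ^ (p - q - 1) * z ^ q = z ^ (p - 1) := by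
          rw [← Real.rpow_add hz0]; congr 1; ring
        calc z ^ (p - q - 1) * |cY s ν z - cY s ν (-z)|
            ≤ z ^ (p - q - 1) * ((nuPlus s ν z + nuMinus s ν z) * (2 * (K * z ^ q))) := by
              apply mul_le_mul_of_nonneg_left ?_ (Real.rpow_nonneg hz0.le _)
              exact le_trans hD (mul_le_mul_of_nonneg_left hDb hnn)
          _ = 2 * K * (z ^ (p - 1) * (nuPlus s ν z + nuMinus s ν z)) := by
              rw [← hexp]; ring
      calc ∫⁻ z in Ioi (1:ℝ), ENNReal.ofReal
            (z ^ (p - q - 1) * |cY s ν z - cY s ν (-z)|)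
          ≤ ∫⁻ z in Ioi (1:ℝ), ENNReal.ofReal (2*K) *
              ENNReal.ofReal (z ^ (p - 1) * (nuPlus s ν z + nuMinus s ν z)) :=
            setLIntegral_mono' measurableSet_Ioi hpoint
        _ = ENNReal.ofReal (2*K) * ∫⁻ z in Ioi (1:ℝ),
              ENNReal.ofReal (z ^ (p - 1) * (nuPlus s ν z + nuMinus s ν z)) :=
            lintegral_const_mul' _ _ ENNReal.ofReal_ne_top
        _ ≤ ENNReal.ofReal (2*K) * ∫⁻ z in Ioi (0:ℝ),
              ENNReal.ofReal (z ^ (p - 1) * (nuPlus s ν z + nuMinus s ν z)) :=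
            mul_le_mul_right (lintegral_mono_set (Ioi_subset_Ioi zero_le_one)) _
        _ < ⊤ := ENNReal.mul_lt_top ENNReal.ofReal_lt_top hI
  refine ⟨forward, backward, fun hrq => ?_⟩
  subst hrq
  exact ⟨forward, backward⟩
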